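/- For real y > 1, ∫_0^1 log(y + sqrt(y^2 - t^4)) dt = log(y + sqrt(y^2 - 1)) - 2 + 2 sqrt(y) · ∫_0^{1/sqrt(y)} ds/sqrt(1 - s^4). -/

import Mathlib

theorem stmt_6 (y : ℝ) (hy : 1 < y) :
    ∫ t in (0 : ℝ)..1, Real.log (y + Real.sqrt (y ^ 2 - t ^ 4))
      = Real.log (y + Real.sqrt (y ^ 2 - 1)) - 2 +
        2 * Real.sqrt y * ∫ s in (0 : ℝ)..(1 / Real.sqrt y), 1 / Real.sqrt (1 - s ^ 4) := by
  have hy0 : 0 < y := by linarith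
  have hu : ∀ t : ℝ, t ∈ Set.uIcc (0:ℝ) 1 → 0 < y ^ 2 - t ^ 4 := by
    intro t ht
    rw [Set.uIcc_of_le (by norm_num)] at ht
    have h4 : t ^ 4 ≤ 1 := pow_le_one₀ ht.1 ht.2
    nlinarith [h4]
  have hcu : Continuous (fun t : ℝ => y ^ 2 - t ^ 4) := by continuity
  have hcs : Continuous (fun t : ℝ => Real.sqrt (y ^ 2 - t ^ 4)) := hcu.sqrt
  have hspos : ∀ t ∈ Set.uIcc (0:ℝ) 1, 0 < Real.sqrt (y ^ 2 - t ^ 4) :=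
    fun t ht => Real.sqrt_pos.mpr (hu t ht)
  have hclog : ContinuousOn (fun t : ℝ => Real.log (y + Real.sqrt (y ^ 2 - t ^ 4)))
      (Set.uIcc (0:ℝ) 1) :=
    ContinuousOn.log (continuousOn_const.add hcs.continuousOn)
      (fun t ht => by have := hspos t ht; positivity)
  have hcdiv : ContinuousOn (fun t : ℝ => 2 * y / Real.sqrt (y ^ 2 - t ^ 4))
      (Set.uIcc (0:ℝ) 1) :=
    continuousOn_const.div hcs.continuousOn (fun t ht => (hspos t ht).ne')
  have hIlog : IntervalIntegrable (fun t : ℝ => Real.log (y + Real.sqrt (y ^ 2 - t ^ 4)))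
      MeasureTheory.volume 0 1 := hclog.intervalIntegrable
  have hIdiv : IntervalIntegrable (fun t : ℝ => 2 * y / Real.sqrt (y ^ 2 - t ^ 4))
      MeasureTheory.volume 0 1 := hcdiv.intervalIntegrable
  -- derivative of t * log (y + sqrt (y^2 - t^4))
  have hder : ∀ t ∈ Set.uIcc (0:ℝ) 1,
      HasDerivAt (fun t : ℝ => t * Real.log (y + Real.sqrt (y ^ 2 - t ^ 4)))
        (Real.log (y + Real.sqrt (y ^ 2 - t ^ 4)) + (2 - 2 * y / Real.sqrt (y ^ 2 - t ^ 4))) t := by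
    intro t ht
    have hu' := hu t ht
    have hs : 0 < Real.sqrt (y ^ 2 - t ^ 4) := Real.sqrt_pos.mpr hu'
    have hys : 0 < y + Real.sqrt (y ^ 2 - t ^ 4) := by positivity
    have h1 : HasDerivAt (fun t : ℝ => y ^ 2 - t ^ 4) (-(4 * t ^ 3)) t := by
      simpa using (hasDerivAt_pow 4 t).const_sub (y ^ 2)
    have h2 := h1.sqrt hu'.ne'
    have h3 := h2.const_add y
    have h4 := h3.log hys.ne'
    have h5 : HasDerivAt (fun t : ℝ => t * Real.log (y + Real.sqrt (y ^ 2 - t ^ 4))) (1 * Real.log (y + Real.sqrt (y ^ 2 - t ^ 4)) + t * (-(4 * t ^ 3) / (2 * Real.sqrt (y ^ 2 - t ^ 4)) / (y + Real.sqrt (y ^ 2 - t ^ 4)))) t := (hasDerivAt_id t).mul h4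
    convert h5 using 1
    have hsq : Real.sqrt (y ^ 2 - t ^ 4) ^ 2 = y ^ 2 - t ^ 4 := Real.sq_sqrt hu'.le
    field_simp
    nlinarith [hsq, hs, hys]
  have hFTC := intervalIntegral.integral_eq_sub_of_hasDerivAt hder
      ((hclog.add (continuousOn_const.sub hcdiv)).intervalIntegrable)
  rw [intervalIntegral.integral_add hIlog (intervalIntegrable_const.sub hIdiv),
      intervalIntegral.integral_sub intervalIntegrable_const hIdiv] at hFTC
  simp only [intervalIntegral.integral_const] at hFTC
  norm_num at hFTC
  -- substitution
  have hsy : 0 < Real.sqrt y := Real.sqrt_pos.mpr hy0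
  have hsy2 : Real.sqrt y ^ 2 = y := Real.sq_sqrt hy0.le
  have hkey : ∀ t : ℝ, 1 / Real.sqrt (1 - (t / Real.sqrt y) ^ 4) = y / Real.sqrt (y ^ 2 - t ^ 4) := by
    intro t
    have h1 : 1 - (t / Real.sqrt y) ^ 4 = (y ^ 2 - t ^ 4) * (1 / y) ^ 2 := by
      have h4 : Real.sqrt y ^ 4 = y ^ 2 := by nlinarith [hsy2]
      field_simp [div_pow, h4]
      rw [h4]; ring
    rw [h1, Real.sqrt_mul' _ (by positivity), Real.sqrt_sq (by positivity)]
    rw [mul_one_div, one_div_div]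
  have hsub : ∫ t in (0:ℝ)..1, y / Real.sqrt (y ^ 2 - t ^ 4)
      = Real.sqrt y * ∫ s in (0:ℝ)..(1 / Real.sqrt y), 1 / Real.sqrt (1 - s ^ 4) := by
    have h := intervalIntegral.integral_comp_div (a := (0:ℝ)) (b := 1)
      (f := fun s : ℝ => 1 / Real.sqrt (1 - s ^ 4)) hsy.ne'
    simp only [hkey] at h
    rw [h]
    norm_num [smul_eq_mul]
  have hsplit : ∫ t in (0:ℝ)..1, 2 * y / Real.sqrt (y ^ 2 - t ^ 4)
      = 2 * ∫ t in (0:ℝ)..1, y / Real.sqrt (y ^ 2 - t ^ 4) := by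
    rw [← intervalIntegral.integral_const_mul]
    congr 1
    funext t
    ring
  rw [hsplit, hsub] at hFTC
  linarith [hFTC]
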